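/- Let d ≥ 1 and suppose g ∈ Sp(2d,ℝ) has Iwasawa decomposition g = k a n with k ∈ K, a = diag(a_1, a_2, …, a_d, a_1^{−1}, …, a_d^{−1}) ∈ A, and n ∈ N. If ‖g e_1‖ ≤ ‖g v‖ for every nonzero v ∈ ℤ^{2d} (where e_1 is the first standard basis vector and ‖·‖ the Euclidean norm), then a_1 / a_2 ≤ 2/√3. -/
import Mathlib


/- Statement 13: if g = k a n is the Iwasawa decomposition of g ∈ Sp(2d,ℝ) and g e_1 is
   a shortest nonzero vector of the lattice g ℤ^{2d}, then a_1/a_2 ≤ 2/√3. -/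

open Matrix

abbrev Mat (d : ℕ) := Matrix (Fin d ⊕ Fin d) (Fin d ⊕ Fin d) ℝ

/-- The Euclidean norm on `ℝ^{2d}`. -/
noncomputable def enorm2 {d : ℕ} (v : Fin d ⊕ Fin d → ℝ) : ℝ := Real.sqrt (∑ i, (v i) ^ 2)

/-- The special orthogonal symplectic group `K = SO(2d) ∩ Sp(2d,ℝ)`. -/
noncomputable def Kset (d : ℕ) : Set (Mat d) :=
  {k | k ∈ Matrix.symplecticGroup (Fin d) ℝ ∧ kᵀ * k = 1 ∧ k.det = 1}

/-- The diagonal symplectic matrix `diag(v_1, …, v_d, v_1⁻¹, …, v_d⁻¹)`. -/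
noncomputable def aDiag {d : ℕ} (v : Fin d → ℝ) : Mat d :=
  Matrix.fromBlocks (Matrix.diagonal v) 0 0 (Matrix.diagonal fun i => (v i)⁻¹)

/-- The Siegel-type set `A_t` of positive diagonal symplectic matrices with
`a_i ≤ t a_{i+1}` and `a_d ≤ t`. -/
noncomputable def Atset (d : ℕ) (t : ℝ) : Set (Mat d) :=
  {a | ∃ v : Fin d → ℝ, (∀ i, 0 < v i) ∧
    (∀ i : Fin d, ∀ h : i.val + 1 < d, v i ≤ t * v ⟨i.val + 1, h⟩) ∧
    (∀ h : 0 < d, v ⟨d - 1, by omega⟩ ≤ t) ∧ a = aDiag v}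

/-- The unipotent upper-triangular symplectic group
`N = {[[N, M],[0, N⁻ᵀ]] : N unipotent upper triangular, N Mᵀ = M Nᵀ}`. -/
noncomputable def Nset (d : ℕ) : Set (Mat d) :=
  {n | ∃ N M : Matrix (Fin d) (Fin d) ℝ,
    (∀ i, N i i = 1) ∧ (∀ i j : Fin d, j < i → N i j = 0) ∧
    N * Mᵀ = M * Nᵀ ∧ n = Matrix.fromBlocks N M 0 (N⁻¹)ᵀ}

/-- The subset `N_u ⊂ N` of matrices all of whose entries are bounded by `u`. -/
noncomputable def Nuset (d : ℕ) (u : ℝ) : Set (Mat d) :=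
  {n | n ∈ Nset d ∧ ∀ i j, |n i j| ≤ u}

/-- **Shortest vectors pinch the first two Iwasawa diagonal entries:** if `g = k a n`
with `k ∈ K`, `a = diag(a_1,…,a_d,a_1⁻¹,…,a_d⁻¹)` positive, `n ∈ N`, and
`‖g e_1‖ ≤ ‖g v‖` for all nonzero `v ∈ ℤ^{2d}`, then `a_1/a_2 ≤ 2/√3`. -/
lemma sum_two_aux {ι : Type*} [Fintype ι] [DecidableEq ι] (i j : ι) (hij : i ≠ j)
    (f : ι → ℝ) (h : ∀ k, k ≠ i → k ≠ j → f k = 0) : ∑ k, f k = f i + f j := by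
  rw [← Finset.sum_subset (Finset.subset_univ {i, j})
    (fun x _ hx => h x (fun h' => hx (by simp [h'])) (fun h' => hx (by simp [h'])))]
  rw [Finset.sum_pair hij]

theorem iwasawa_shortest_vector_ratio (d : ℕ) (hd : 2 ≤ d)
    (g k n : Mat d) (v : Fin d → ℝ)
    (hg : g ∈ Matrix.symplecticGroup (Fin d) ℝ)
    (hk : k ∈ Kset d) (hv : ∀ i, 0 < v i) (hn : n ∈ Nset d)
    (hiwa : g = k * aDiag v * n)
    (hshort : ∀ m : Fin d ⊕ Fin d → ℤ, (fun i => (m i : ℝ)) ≠ 0 →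
      enorm2 (g.mulVec fun i => ((Pi.single (Sum.inl (⟨0, by omega⟩ : Fin d)) 1 : Fin d ⊕ Fin d → ℤ) i : ℝ))
        ≤ enorm2 (g.mulVec fun i => (m i : ℝ))) :
    v ⟨0, by omega⟩ / v ⟨1, by omega⟩ ≤ 2 / Real.sqrt 3 := by
  classical
  obtain ⟨N, M, hN1, hN0, hNM, hneq⟩ := hn
  obtain ⟨hkS, hkO, hkdet⟩ := hk
  set i0 : Fin d := ⟨0, by omega⟩ with hi0
  set i1 : Fin d := ⟨1, by omega⟩ with hi1
  have hi01 : i0 ≠ i1 := by simp [hi0, hi1, Fin.ext_iff]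
  have hlt01 : i0 < i1 := by simp [hi0, hi1, Fin.lt_def]
  -- orthogonality: k preserves sums of squares
  have horth : ∀ y : Fin d ⊕ Fin d → ℝ, ∑ i, (k.mulVec y i) ^ 2 = ∑ i, (y i) ^ 2 := by
    intro y
    have h1 : (k.mulVec y) ⬝ᵥ (k.mulVec y) = y ⬝ᵥ y := by
      rw [Matrix.dotProduct_mulVec]
      have h2 : k.mulVec y = Matrix.vecMul y kᵀ := by
        rw [Matrix.vecMul_transpose]
      rw [h2, Matrix.vecMul_vecMul, hkO, Matrix.vecMul_one]
    simpa [dotProduct, pow_two] using h1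
  -- reduction of enorm2 through k
  have hred : ∀ x : Fin d ⊕ Fin d → ℝ,
      enorm2 (g.mulVec x) = Real.sqrt (∑ i, (((aDiag v * n).mulVec x) i) ^ 2) := by
    intro x
    have : g.mulVec x = k.mulVec ((aDiag v * n).mulVec x) := by
      rw [hiwa, mul_assoc, ← Matrix.mulVec_mulVec]
    rw [enorm2, this, horth]
  -- the diagonal matrix
  have haD : aDiag v = Matrix.diagonal (Sum.elim v fun i => (v i)⁻¹) := by
    rw [aDiag, Matrix.fromBlocks_diagonal]
  -- sum-of-squares formula for vectors supported on the first two coordinates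
  have hkey : ∀ a b : ℝ,
      ∑ i, (((aDiag v * n).mulVec
        (fun j => if j = Sum.inl i0 then a else if j = Sum.inl i1 then b else 0)) i) ^ 2
      = (v i0 * (a + N i0 i1 * b)) ^ 2 + (v i1 * b) ^ 2 := by
    intro a b
    set x : Fin d ⊕ Fin d → ℝ :=
      fun j => if j = Sum.inl i0 then a else if j = Sum.inl i1 then b else 0 with hx
    have hz : n.mulVec x = fun i => n i (Sum.inl i0) * a + n i (Sum.inl i1) * b := by
      funext i
      show ∑ j, n i j * x j = _
      rw [sum_two_aux (Sum.inl i0) (Sum.inl i1) (by simpa using hi01)]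
      · simp [hx, hi01, hi01.symm]
      · intro j hj0 hj1
        have : x j = 0 := by simp [hx, hj0, hj1]
        simp [this]
    have hw : (aDiag v * n).mulVec x
        = fun i => if i = Sum.inl i0 then v i0 * (a + N i0 i1 * b)
            else if i = Sum.inl i1 then v i1 * b else 0 := by
      rw [← Matrix.mulVec_mulVec, hz, haD]
      funext i
      rw [Matrix.mulVec_diagonal]
      rcases i with t | t
      · have hnt : ∀ j, n (Sum.inl t) (Sum.inl j) = N t j := by
          intro j; rw [hneq]; rfl
        by_cases ht0 : t = i0
        · subst ht0
          simp [hnt, hN1, Sum.elim_inl]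
        · by_cases ht1 : t = i1
          · subst ht1
            have : N i1 i0 = 0 := hN0 _ _ hlt01
            simp [hnt, hN1, this, Sum.elim_inl, hi01.symm, ht0]
          · have hv0 : t.val ≠ 0 := by
              intro h; exact ht0 (by simp [hi0, Fin.ext_iff, h])
            have hv1 : t.val ≠ 1 := by
              intro h; exact ht1 (by simp [hi1, Fin.ext_iff, h])
            have h0 : N t i0 = 0 := hN0 _ _ (by simp [hi0, Fin.lt_def]; omega)
            have h1 : N t i1 = 0 := hN0 _ _ (by simp [hi1, Fin.lt_def]; omega)
            simp [hnt, h0, h1, ht0, ht1]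
      · have hnt : ∀ j, n (Sum.inr t) (Sum.inl j) = 0 := by
          intro j; rw [hneq]; rfl
        simp [hnt]
    rw [hw]
    rw [sum_two_aux (Sum.inl i0) (Sum.inl i1) (by simpa using hi01)]
    · simp [hi01, hi01.symm]
    · intro j hj0 hj1; simp [hj0, hj1]
  -- apply the shortest-vector hypothesis
  set c : ℤ := -(round (N i0 i1)) with hc
  set m : Fin d ⊕ Fin d → ℤ :=
    fun j => if j = Sum.inl i0 then c else if j = Sum.inl i1 then 1 else 0 with hm
  have hmne : (fun i => (m i : ℝ)) ≠ 0 := by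
    intro h
    have := congrFun h (Sum.inl i1)
    simp [hm, hi01.symm] at this
  have hsh := hshort m hmne
  have he1 : (fun i => ((Pi.single (Sum.inl (⟨0, by omega⟩ : Fin d)) 1 :
      Fin d ⊕ Fin d → ℤ) i : ℝ))
      = fun j => if j = Sum.inl i0 then (1:ℝ) else if j = Sum.inl i1 then 0 else 0 := by
    funext j
    by_cases hj : j = Sum.inl i0
    · subst hj; simp [hi0]
    · rw [Pi.single_apply, if_neg (by simpa [hi0] using hj)]
      simp [hj]
  have hmr : (fun i => (m i : ℝ))
      = fun j => if j = Sum.inl i0 then (c:ℝ) else if j = Sum.inl i1 then 1 else 0 := by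
    funext j; simp [hm]
  rw [he1, hmr, hred, hred, hkey, hkey] at hsh
  have hv0 := hv i0
  have hv1 := hv i1
  -- left side simplifies to v i0
  have hL : Real.sqrt ((v i0 * (1 + N i0 i1 * 0)) ^ 2 + (v i1 * 0) ^ 2) = v i0 := by
    rw [show (v i0 * (1 + N i0 i1 * 0)) ^ 2 + (v i1 * 0) ^ 2 = (v i0) ^ 2 by ring]
    exact Real.sqrt_sq hv0.le
  rw [hL] at hsh
  have hsq : (v i0) ^ 2 ≤ (v i0 * ((c:ℝ) + N i0 i1 * 1)) ^ 2 + (v i1 * 1) ^ 2 :=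
    (Real.le_sqrt' hv0).mp hsh
  have hround : |(c:ℝ) + N i0 i1| ≤ 1 / 2 := by
    have := abs_sub_round (N i0 i1)
    rw [hc]
    push_cast
    rw [show -(round (N i0 i1) : ℝ) + N i0 i1 = N i0 i1 - round (N i0 i1) by ring]
    exact this
  have hround2 : ((c:ℝ) + N i0 i1) ^ 2 ≤ 1 / 4 := by
    nlinarith [sq_abs ((c:ℝ) + N i0 i1), abs_nonneg ((c:ℝ) + N i0 i1)]
  have hmain : 3 * (v i0) ^ 2 ≤ 4 * (v i1) ^ 2 := by nlinarith [sq_nonneg (v i0)]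
  -- conclude
  have hs3 : (0:ℝ) < Real.sqrt 3 := Real.sqrt_pos.mpr (by norm_num)
  have hfin : (v i0 / v i1) ^ 2 ≤ (2 / Real.sqrt 3) ^ 2 := by
    rw [div_pow, div_pow, Real.sq_sqrt (by norm_num : (0:ℝ) ≤ 3)]
    rw [div_le_div_iff₀ (by positivity) (by norm_num)]
    nlinarith
  calc v i0 / v i1 = Real.sqrt ((v i0 / v i1) ^ 2) :=
        (Real.sqrt_sq (by positivity)).symm
    _ ≤ Real.sqrt ((2 / Real.sqrt 3) ^ 2) := Real.sqrt_le_sqrt hfin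
    _ = 2 / Real.sqrt 3 := Real.sqrt_sq (by positivity)
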